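/- Let ρ : [0,1] → [0,1] be continuously differentiable and satisfy the reduced ODE (1 − 2ρ(ξ)) ρ'(ξ) = −g(ξ) ρ(ξ)(1 − ρ(ξ)) on [0,1]. If 0 ≤ ρ(0) < ρ_c^0 then ρ(ξ) < 1/2 for all ξ ∈ [0,1] and 0 ≤ ρ(1) < 1 − ρ_c^1. Symmetrically, if 1 − ρ_c^0 < ρ(0) ≤ 1 then ρ(ξ) > 1/2 for all ξ ∈ [0,1] and ρ_c^1 < ρ(1) ≤ 1. -/

import Mathlib

open Set

set_option maxHeartbeats 1000000

/-- A continuously differentiable solution `ρ : [0,1] → [0,1]` of the reduced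
ODE starting below `ρ_c^0 = (1/2)(1-√(1-k(ξ*)/k(0)))` stays below the fold line `ρ = 1/2`
and ends with `0 ≤ ρ(1) < 1 - ρ_c^1` where `ρ_c^1 = (1/2)(1+√(1-k(ξ*)/k(1)))`;
symmetrically, starting above `1 - ρ_c^0` it stays above `1/2` and ends with
`ρ_c^1 < ρ(1) ≤ 1`. -/
theorem reduced_solutions_outside_canards
    (k : ℝ → ℝ) (ξs : ℝ)
    (hk : ContDiff ℝ 2 k)
    (hkpos : ∀ x ∈ Icc (0:ℝ) 1, 0 < k x)
    (hξs : ξs ∈ Ioo (0:ℝ) 1)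
    (hmin : ∀ x ∈ Icc (0:ℝ) 1, x ≠ ξs → k ξs < k x)
    (hk's : deriv k ξs = 0)
    (hk''s : 0 < deriv (deriv k) ξs)
    (ρ ρ' : ℝ → ℝ)
    (hrange : ∀ ξ ∈ Icc (0:ℝ) 1, ρ ξ ∈ Icc (0:ℝ) 1)
    (hρ : ∀ ξ ∈ Icc (0:ℝ) 1, HasDerivWithinAt ρ (ρ' ξ) (Icc (0:ℝ) 1) ξ)
    (hρ'cont : ContinuousOn ρ' (Icc (0:ℝ) 1))
    (hode : ∀ ξ ∈ Icc (0:ℝ) 1,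
      (1 - 2 * ρ ξ) * ρ' ξ = -(deriv k ξ / k ξ) * ρ ξ * (1 - ρ ξ)) :
    (ρ 0 < 1/2 * (1 - Real.sqrt (1 - k ξs / k 0)) →
      (∀ ξ ∈ Icc (0:ℝ) 1, ρ ξ < 1/2) ∧
      0 ≤ ρ 1 ∧ ρ 1 < 1 - 1/2 * (1 + Real.sqrt (1 - k ξs / k 1))) ∧
    (1 - 1/2 * (1 - Real.sqrt (1 - k ξs / k 0)) < ρ 0 →
      (∀ ξ ∈ Icc (0:ℝ) 1, 1/2 < ρ ξ) ∧
      1/2 * (1 + Real.sqrt (1 - k ξs / k 1)) < ρ 1 ∧ ρ 1 ≤ 1) := by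
  have h0I : (0:ℝ) ∈ Icc (0:ℝ) 1 := by norm_num
  have h1I : (1:ℝ) ∈ Icc (0:ℝ) 1 := by norm_num
  have hξsI : ξs ∈ Icc (0:ℝ) 1 := ⟨hξs.1.le, hξs.2.le⟩
  have hk0 : 0 < k 0 := hkpos 0 h0I
  have hk1 : 0 < k 1 := hkpos 1 h1I
  have hks : 0 < k ξs := hkpos ξs hξsI
  have hks0 : k ξs < k 0 := hmin 0 h0I hξs.1.ne
  have hks1 : k ξs < k 1 := hmin 1 h1I hξs.2.ne'
  have hksle : ∀ x ∈ Icc (0:ℝ) 1, k ξs ≤ k x := by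
    intro x hx
    by_cases h : x = ξs
    · rw [h]
    · exact (hmin x hx h).le
  -- derivative of k
  have hkd : ∀ ξ : ℝ, HasDerivAt k (deriv k ξ) ξ :=
    fun ξ => ((hk.differentiable (by norm_num)) ξ).hasDerivAt
  -- conserved quantity F = k * ρ * (1 - ρ)
  set F : ℝ → ℝ := fun ξ => k ξ * (ρ ξ * (1 - ρ ξ)) with hFdef
  have hF : ∀ ξ ∈ Icc (0:ℝ) 1, HasDerivWithinAt F 0 (Icc (0:ℝ) 1) ξ := by
    intro ξ hξ
    have h1 : HasDerivWithinAt (fun x => ρ x * (1 - ρ x))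
        (ρ' ξ * (1 - ρ ξ) + ρ ξ * (0 - ρ' ξ)) (Icc (0:ℝ) 1) ξ :=
      (hρ ξ hξ).mul ((hasDerivWithinAt_const ξ _ (1:ℝ)).sub (hρ ξ hξ))
    have h2 := ((hkd ξ).hasDerivWithinAt).mul h1
    have hkne : k ξ ≠ 0 := (hkpos ξ hξ).ne'
    have hode' := hode ξ hξ
    have key : deriv k ξ * (ρ ξ * (1 - ρ ξ)) +
        k ξ * (ρ' ξ * (1 - ρ ξ) + ρ ξ * (0 - ρ' ξ)) = 0 := by
      field_simp at hode'
      nlinarith [hode']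
    exact h2.congr_deriv key
  have hUD : UniqueDiffOn ℝ (Icc (0:ℝ) 1) := uniqueDiffOn_Icc zero_lt_one
  have hconst : ∀ ξ ∈ Icc (0:ℝ) 1, F ξ = F 0 := by
    apply constant_of_derivWithin_zero
    · intro x hx
      exact (hF x hx).differentiableWithinAt
    · intro x hx
      exact (hF x (Ico_subset_Icc_self hx)).derivWithin (hUD x (Ico_subset_Icc_self hx))
  have hρcont : ContinuousOn ρ (Icc (0:ℝ) 1) :=
    fun ξ hξ => (hρ ξ hξ).continuousWithinAt
  -- sqrt facts
  set s0 := Real.sqrt (1 - k ξs / k 0) with hs0def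
  set s1 := Real.sqrt (1 - k ξs / k 1) with hs1def
  have hs0nn : 0 ≤ s0 := Real.sqrt_nonneg _
  have hs1nn : 0 ≤ s1 := Real.sqrt_nonneg _
  have hs0sq : s0 ^ 2 = 1 - k ξs / k 0 := by
    apply Real.sq_sqrt
    rw [sub_nonneg, div_le_one hk0]
    exact hks0.le
  have hs1sq : s1 ^ 2 = 1 - k ξs / k 1 := by
    apply Real.sq_sqrt
    rw [sub_nonneg, div_le_one hk1]
    exact hks1.le
  have hρ0 := hrange 0 h0I
  have hρ1 := hrange 1 h1I
  constructor
  · -- case below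
    intro h0
    have hρ0half : ρ 0 < 1/2 := by nlinarith
    -- F 0 < k ξs / 4
    have hF0 : F 0 < k ξs / 4 := by
      have h1 : s0 < 1 - 2 * ρ 0 := by linarith
      have h2 : s0 ^ 2 < (1 - 2 * ρ 0) ^ 2 := by nlinarith
      have h3 : 4 * (ρ 0 * (1 - ρ 0)) < k ξs / k 0 := by nlinarith
      have h4 := (lt_div_iff₀ hk0).mp h3
      simp only [hFdef]
      linarith
    have hhalf : ∀ ξ ∈ Icc (0:ℝ) 1, ρ ξ < 1/2 := by
      intro ξ hξ
      by_contra h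
      push_neg at h
      have hsub : Icc (0:ℝ) ξ ⊆ Icc (0:ℝ) 1 := Icc_subset_Icc le_rfl hξ.2
      have hiv := intermediate_value_Icc hξ.1 (hρcont.mono hsub)
      obtain ⟨c, hc, hc2⟩ := hiv ⟨hρ0half.le, h⟩
      have hcI : c ∈ Icc (0:ℝ) 1 := hsub hc
      have hcc := hconst c hcI
      simp only [hFdef] at hcc
      rw [hc2] at hcc
      have := hksle c hcI
      simp only [hFdef] at hF0
      nlinarith
    refine ⟨hhalf, hρ1.1, ?_⟩
    have hF1 := hconst 1 h1I
    simp only [hFdef] at hF1 hF0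
    have h3 : 4 * (ρ 1 * (1 - ρ 1)) < k ξs / k 1 := by
      rw [lt_div_iff₀ hk1]; nlinarith
    have hh := hhalf 1 h1I
    have : s1 < 1 - 2 * ρ 1 := by
      rw [hs1def]
      rw [show (1:ℝ) - 2 * ρ 1 = Real.sqrt ((1 - 2 * ρ 1)^2) by
        rw [Real.sqrt_sq (by linarith)]]
      apply Real.sqrt_lt_sqrt
      · rw [sub_nonneg, div_le_one hk1]; exact hks1.le
      · nlinarith
    linarith
  · -- case above
    intro h0
    have hρ0half : 1/2 < ρ 0 := by nlinarith
    have hF0 : F 0 < k ξs / 4 := by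
      have h1 : s0 < 2 * ρ 0 - 1 := by linarith
      have h2 : s0 ^ 2 < (2 * ρ 0 - 1) ^ 2 := by nlinarith
      have h3 : 4 * (ρ 0 * (1 - ρ 0)) < k ξs / k 0 := by nlinarith
      have h4 := (lt_div_iff₀ hk0).mp h3
      simp only [hFdef]
      linarith
    have hhalf : ∀ ξ ∈ Icc (0:ℝ) 1, 1/2 < ρ ξ := by
      intro ξ hξ
      by_contra h
      push_neg at h
      have hsub : Icc (0:ℝ) ξ ⊆ Icc (0:ℝ) 1 := Icc_subset_Icc le_rfl hξ.2
      have hiv := intermediate_value_Icc' hξ.1 (hρcont.mono hsub)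
      obtain ⟨c, hc, hc2⟩ := hiv ⟨h, hρ0half.le⟩
      have hcI : c ∈ Icc (0:ℝ) 1 := hsub hc
      have hcc := hconst c hcI
      simp only [hFdef] at hcc
      rw [hc2] at hcc
      have := hksle c hcI
      simp only [hFdef] at hF0
      nlinarith
    refine ⟨hhalf, ?_, hρ1.2⟩
    have hF1 := hconst 1 h1I
    simp only [hFdef] at hF1 hF0
    have h3 : 4 * (ρ 1 * (1 - ρ 1)) < k ξs / k 1 := by
      rw [lt_div_iff₀ hk1]; nlinarith
    have hh := hhalf 1 h1I
    have : s1 < 2 * ρ 1 - 1 := by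
      rw [hs1def]
      rw [show 2 * ρ 1 - 1 = Real.sqrt ((2 * ρ 1 - 1)^2) by
        rw [Real.sqrt_sq (by linarith)]]
      apply Real.sqrt_lt_sqrt
      · rw [sub_nonneg, div_le_one hk1]; exact hks1.le
      · nlinarith
    linarith
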